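/- Let X be a pseudometric space, λ ∈ (0,1) and C₀ ≥ 0. Let A : X ≃ X and f : X ≃ X be bijections such that dist(A⁻¹(x), A⁻¹(y)) ≤ λ·dist(x, y) for all x, y ∈ X, and dist(f⁻¹(x), A⁻¹(x)) ≤ C₀ for all x ∈ X. Fix a real C ≥ C₀/(1−λ) and a subset L ⊆ X. Then the sequence of sets n ↦ (f⁻¹)^[n] '' (cthickening C ((A^[n]) '' L)) is antitone: for every n, (f⁻¹)^[n+1] '' (cthickening C ((A^[n+1]) '' L)) ⊆ (f⁻¹)^[n] '' (cthickening C ((A^[n]) '' L)). -/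

import Mathlib

open Metric Set

lemma key_step {X : Type*} [PseudoMetricSpace X] (l C₀ : ℝ)
    (hl0 : 0 < l) (hl1 : l < 1) (hC₀ : 0 ≤ C₀)
    (A f : X ≃ X)
    (hA : ∀ x y : X, dist (A.symm x) (A.symm y) ≤ l * dist x y)
    (hfA : ∀ x : X, dist (f.symm x) (A.symm x) ≤ C₀)
    (C : ℝ) (hC : C₀ / (1 - l) ≤ C) (S : Set X) :
    ⇑f.symm '' cthickening C (⇑A '' S) ⊆ cthickening C S := by
  have hl' : 0 < 1 - l := by linarith
  have hC0 : 0 ≤ C := le_trans (div_nonneg hC₀ hl'.le) hC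
  have hkey : C₀ + l * C ≤ C := by
    have h := (div_le_iff₀ hl').mp hC
    nlinarith
  rcases S.eq_empty_or_nonempty with rfl | hS
  · simp
  rintro _ ⟨x, hx, rfl⟩
  rw [mem_cthickening_iff,
    ENNReal.le_ofReal_iff_toReal_le (infEdist_ne_top (hS.image A)) hC0] at hx
  rw [mem_cthickening_iff,
    ENNReal.le_ofReal_iff_toReal_le (infEdist_ne_top hS) hC0]
  have h1 : infDist (A.symm x) S ≤ l * infDist x (⇑A '' S) := by
    refine le_of_forall_pos_le_add fun ε hε => ?_
    have hlt : infDist x (⇑A '' S) < infDist x (⇑A '' S) + ε / l :=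
      lt_add_of_pos_right _ (div_pos hε hl0)
    obtain ⟨y, ⟨z, hz, rfl⟩, hy⟩ := (infDist_lt_iff (hS.image A)).mp hlt
    calc infDist (A.symm x) S ≤ dist (A.symm x) z := infDist_le_dist_of_mem hz
      _ = dist (A.symm x) (A.symm (A z)) := by rw [A.symm_apply_apply]
      _ ≤ l * dist x (A z) := hA _ _
      _ ≤ l * (infDist x (⇑A '' S) + ε / l) := by
          exact mul_le_mul_of_nonneg_left hy.le hl0.le
      _ = l * infDist x (⇑A '' S) + ε := by field_simp
  calc infDist (f.symm x) S ≤ infDist (A.symm x) S + dist (f.symm x) (A.symm x) :=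
        infDist_le_infDist_add_dist
    _ ≤ l * infDist x (⇑A '' S) + C₀ := add_le_add h1 (hfA x)
    _ ≤ l * C + C₀ := by
        have hx' : infDist x (⇑A '' S) ≤ C := hx
        have := mul_le_mul_of_nonneg_left hx' hl0.le
        linarith
    _ ≤ C := by linarith

/-- The sequence `n ↦ (f⁻¹)^[n] '' (cthickening C ((A^[n]) '' L))` is antitone. -/
theorem stmt_3 {X : Type*} [PseudoMetricSpace X] (l C₀ : ℝ)
    (hl0 : 0 < l) (hl1 : l < 1) (hC₀ : 0 ≤ C₀)
    (A f : X ≃ X)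
    (hA : ∀ x y : X, dist (A.symm x) (A.symm y) ≤ l * dist x y)
    (hfA : ∀ x : X, dist (f.symm x) (A.symm x) ≤ C₀)
    (C : ℝ) (hC : C₀ / (1 - l) ≤ C) (L : Set X) :
    ∀ n : ℕ,
      (⇑f.symm)^[n + 1] '' (cthickening C ((⇑A)^[n + 1] '' L)) ⊆
        (⇑f.symm)^[n] '' (cthickening C ((⇑A)^[n] '' L)) := by
  intro n
  have h1 : (⇑A)^[n + 1] '' L = ⇑A '' ((⇑A)^[n] '' L) := by
    rw [Function.iterate_succ', Set.image_comp]
  have h2 : (⇑f.symm)^[n + 1] = (⇑f.symm)^[n] ∘ ⇑f.symm :=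
    Function.iterate_succ _ _
  rw [h1, h2, Set.image_comp]
  exact Set.image_mono (key_step l C₀ hl0 hl1 hC₀ A f hA hfA C hC _)
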